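/- Let g ∈ R = A[z;σ] be nonzero and left-reduced, let T_g = {k : e_k g ≠ 0} be its support, and let π_(g) := Π_{k ∈ T_g} π_k where π_k is the prime factor of x^n−1 corresponding to e_k; set κ := deg π_(g). Then the family g, xg, ..., x^{κ−1}g is a basis of the left ideal ⟨g⟩ as a left F[z]-module; equivalently, the σ-circulant M^σ(g) has rank κ and its first κ rows form a full rank generator matrix of the submodule corresponding to ⟨g⟩. -/

import Mathlib

open Polynomial

/-- A = F[x]/(x^n − 1). -/
abbrev Amod (F : Type) [Field F] (n : ℕ) : Type :=
  Polynomial F ⧸ (Ideal.span {Polynomial.X ^ n - 1} : Ideal (Polynomial F))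

/-- the class of x in A. -/
noncomputable def xbar (F : Type) [Field F] (n : ℕ) : Amod F n :=
  Ideal.Quotient.mk _ Polynomial.X

/-- The skew multiplication of A[z;σ]: a*z = z*σ(a). -/
noncomputable def skewMul {F A : Type*} [CommRing F] [CommRing A] [Algebra F A]
    (σ : A ≃ₐ[F] A) (g h : Polynomial A) : Polynomial A :=
  ∑ ν ∈ g.support, ∑ μ ∈ h.support,
    Polynomial.monomial (ν + μ) ((σ ^ μ) (g.coeff ν) * h.coeff μ)

/-- m is the leading monomial z^{deg f} e_j of f, with respect to the
term-over-position order on the monomials z^μ e_k. -/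
def IsLM {A : Type*} [CommRing A] {r : ℕ} (e : Fin r → A) (f m : Polynomial A) : Prop :=
  ∃ j : Fin r, m = Polynomial.monomial f.natDegree (e j) ∧
    e j * f.leadingCoeff ≠ 0 ∧ ∀ l : Fin r, j < l → e l * f.leadingCoeff = 0

/-- g is left-reduced: for k ≠ l, no nonzero term of the component e_k·g is right
divisible by the leading monomial of the component e_l·g. -/
def LeftReduced {F A : Type*} [CommRing F] [CommRing A] [Algebra F A] {r : ℕ}
    (σ : A ≃ₐ[F] A) (e : Fin r → A) (g : Polynomial A) : Prop :=
  ∀ k l : Fin r, k ≠ l →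
    skewMul σ (Polynomial.C (e k)) g ≠ 0 → skewMul σ (Polynomial.C (e l)) g ≠ 0 →
    ∀ (μ : ℕ) (j : Fin r),
      e j * (skewMul σ (Polynomial.C (e k)) g).coeff μ ≠ 0 →
      ∀ m : Polynomial A, IsLM e (skewMul σ (Polynomial.C (e l)) g) m →
        ¬ ∃ h : Polynomial A,
          Polynomial.monomial μ (e j * (skewMul σ (Polynomial.C (e k)) g).coeff μ)
            = skewMul σ h m

section SkewBasics
variable {F A : Type*} [CommRing F] [CommRing A] [Algebra F A] (σ : A ≃ₐ[F] A)

private lemma sum_ext_range {M : Type*} [AddCommMonoid M] (s : Finset ℕ) (m : ℕ) (f : ℕ → M)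
    (h0 : ∀ ν ∉ s, f ν = 0) (h1 : ∀ ν, m < ν → f ν = 0) :
    ∑ ν ∈ s, f ν = ∑ ν ∈ Finset.range (m+1), f ν := by
  have e1 : ∑ ν ∈ s, f ν = ∑ ν ∈ s ∪ Finset.range (m+1), f ν :=
    Finset.sum_subset Finset.subset_union_left (fun x _ hx => h0 x hx)
  have e2 : ∑ ν ∈ Finset.range (m+1), f ν = ∑ ν ∈ s ∪ Finset.range (m+1), f ν :=
    Finset.sum_subset Finset.subset_union_right
      (fun x _ hx => h1 x (by simpa using hx))
  rw [e1, e2]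

lemma skewMul_coeff (p q : Polynomial A) (m : ℕ) :
    (skewMul σ p q).coeff m
      = ∑ ν ∈ Finset.range (m+1), (σ ^ (m - ν)) (p.coeff ν) * q.coeff (m - ν) := by
  unfold skewMul
  simp only [Polynomial.finset_sum_coeff, Polynomial.coeff_monomial]
  rw [sum_ext_range p.support m _
      (fun ν hν => by
        simp [Polynomial.notMem_support_iff.mp hν])
      (fun ν hν => by
        apply Finset.sum_eq_zero
        intro μ _
        rw [if_neg]
        omega)]
  refine Finset.sum_congr rfl (fun ν hν => ?_)
  have hνm : ν ≤ m := by simpa [Nat.lt_succ_iff] using hν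
  rw [sum_ext_range q.support m _
      (fun μ hμ => by simp [Polynomial.notMem_support_iff.mp hμ])
      (fun μ hμ => by rw [if_neg]; omega)]
  rw [Finset.sum_eq_single (m - ν)]
  · rw [if_pos (by omega)]
  · intro μ _ hμ
    rw [if_neg (by omega)]
  · intro h
    exact absurd (Finset.mem_range.mpr (by omega)) h

lemma skewMul_zero_right (p : Polynomial A) : skewMul σ p 0 = 0 := by
  ext m; simp [skewMul_coeff]

lemma skewMul_zero_left (p : Polynomial A) : skewMul σ 0 p = 0 := by
  ext m; simp [skewMul_coeff]

lemma skewMul_add_left (p p' q : Polynomial A) :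
    skewMul σ (p + p') q = skewMul σ p q + skewMul σ p' q := by
  ext m
  simp [skewMul_coeff, add_mul, Finset.sum_add_distrib]

lemma skewMul_sum_left {ι : Type*} (s : Finset ι) (p : ι → Polynomial A) (q : Polynomial A) :
    skewMul σ (∑ i ∈ s, p i) q = ∑ i ∈ s, skewMul σ (p i) q := by
  classical
  induction s using Finset.induction_on with
  | empty => simp [skewMul_zero_left]
  | @insert _ _ h ih => simp [Finset.sum_insert h, skewMul_add_left, ih]

lemma skewMul_C_left (a : A) (q : Polynomial A) (m : ℕ) :
    (skewMul σ (Polynomial.C a) q).coeff m = (σ ^ m) a * q.coeff m := by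
  rw [skewMul_coeff, Finset.sum_eq_single 0]
  · simp
  · intro ν _ hν
    simp [Polynomial.coeff_C, hν]
  · simp

lemma skewMul_mul_C_left (p : Polynomial A) (b : A) (q : Polynomial A) :
    skewMul σ (p * Polynomial.C b) q = skewMul σ p (skewMul σ (Polynomial.C b) q) := by
  ext m
  rw [skewMul_coeff, skewMul_coeff]
  refine Finset.sum_congr rfl (fun ν _ => ?_)
  rw [Polynomial.coeff_mul_C, skewMul_C_left, map_mul]
  ring

lemma skewMul_monomial_monomial (s t : ℕ) (a b : A) :
    skewMul σ (Polynomial.monomial s a) (Polynomial.monomial t b)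
      = Polynomial.monomial (s + t) ((σ ^ t) a * b) := by
  ext m
  rw [skewMul_coeff, Polynomial.coeff_monomial]
  by_cases hm : s + t = m
  · rw [Finset.sum_eq_single s]
    · rw [Polynomial.coeff_monomial, if_pos rfl, Polynomial.coeff_monomial,
        if_pos (by omega), if_pos hm]
      have h1 : m - s = t := by omega
      rw [h1]
    · intro ν _ hν
      rw [Polynomial.coeff_monomial, if_neg (fun h => hν h.symm), map_zero, zero_mul]
    · intro h
      exact absurd (Finset.mem_range.mpr (by omega)) h
  · rw [if_neg hm]
    apply Finset.sum_eq_zero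
    intro ν hν
    have hνm : ν ≤ m := by simpa [Nat.lt_succ_iff] using hν
    by_cases hs : s = ν
    · subst hs
      rw [Polynomial.coeff_monomial (n := t), if_neg (by omega), mul_zero]
    · rw [Polynomial.coeff_monomial, if_neg hs, map_zero, zero_mul]

end SkewBasics

set_option maxHeartbeats 1600000 in
set_option synthInstance.maxHeartbeats 400000 in
/-- for a nonzero left-reduced g ∈ R = A[z;σ] with support T and
κ = deg Π_{k ∈ T} π_k, the family g, xg, ..., x^{κ−1}g is a left F[z]-basis of the left
ideal ⟨g⟩: it is F[z]-linearly independent and F[z]-spans ⟨g⟩. -/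
theorem stmt_19 (F : Type) [Field F] [Fintype F] (n : ℕ) (hn : 0 < n)
    (hchar : ¬ (ringChar F ∣ n))
    (r : ℕ) (π : Fin r → Polynomial F)
    (hfact : (Polynomial.X ^ n - 1 : Polynomial F) = ∏ k : Fin r, π k)
    (hirr : ∀ k, Irreducible (π k)) (hmonic : ∀ k, (π k).Monic)
    (hdist : Function.Injective π)
    (e : Fin r → Amod F n)
    (hidem : ∀ k, e k * e k = e k) (hne : ∀ k, e k ≠ 0)
    (horth : ∀ k l, k ≠ l → e k * e l = 0)
    (hsum : ∑ k : Fin r, e k = 1)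
    (hπe : ∀ k, Ideal.Quotient.mk (Ideal.span {Polynomial.X ^ n - 1} : Ideal (Polynomial F))
        (π k) * e k = 0)
    (σ : Amod F n ≃ₐ[F] Amod F n)
    (g : Polynomial (Amod F n)) (hg : g ≠ 0) (hred : LeftReduced σ e g)
    (T : Finset (Fin r)) (hT : ∀ k, k ∈ T ↔ skewMul σ (Polynomial.C (e k)) g ≠ 0)
    (κ : ℕ) (hκ : κ = (∏ k ∈ T, π k).natDegree) :
    (∀ c : Fin κ → Polynomial F,
        (∑ i : Fin κ, skewMul σ ((c i).map (algebraMap F (Amod F n)))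
            (skewMul σ (Polynomial.C (xbar F n ^ (i : ℕ))) g)) = 0 →
        ∀ i, c i = 0) ∧
    (∀ f : Polynomial (Amod F n),
        (∃ u, f = skewMul σ u g) ↔
        ∃ c : Fin κ → Polynomial F,
          f = ∑ i : Fin κ, skewMul σ ((c i).map (algebraMap F (Amod F n)))
            (skewMul σ (Polynomial.C (xbar F n ^ (i : ℕ))) g)) := by
  classical
  -- notation
  set Iq : Ideal (Polynomial F) := Ideal.span {Polynomial.X ^ n - 1} with hIq
  set mk : Polynomial F →+* Amod F n := Ideal.Quotient.mk Iq with hmk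
  -- the components of g
  set G : Fin r → Polynomial (Amod F n) := fun k => skewMul σ (Polynomial.C (e k)) g with hGdef
  have hTG : ∀ k, k ∈ T ↔ G k ≠ 0 := hT
  have hGzero : ∀ k, k ∉ T → G k = 0 := fun k hk => not_not.mp (fun h => hk ((hTG k).mpr h))
  have hGcoeff : ∀ k m, (G k).coeff m = (σ ^ m) (e k) * g.coeff m :=
    fun k m => skewMul_C_left σ (e k) g m
  -- the kernel of P ↦ mk P * e j is the ideal generated by π j
  have hkerrev : ∀ (j : Fin r) (P : Polynomial F), π j ∣ P → mk P * e j = 0 := by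
    rintro j P ⟨s, rfl⟩
    rw [map_mul, mul_comm (mk (π j)) (mk s), mul_assoc, hπe j, mul_zero]
  have hker : ∀ (j : Fin r) (P : Polynomial F), mk P * e j = 0 → π j ∣ P := by
    intro j P h
    by_contra hdvd
    obtain ⟨a, b, hab⟩ := (hirr j).coprime_iff_not_dvd.mpr hdvd
    have h1 := congrArg mk hab
    rw [map_add, map_mul, map_mul, map_one] at h1
    have h2 := congrArg (· * e j) h1
    simp only [add_mul, one_mul, mul_assoc] at h2
    rw [hπe j, h, mul_zero, mul_zero, add_zero] at h2
    exact hne j h2.symm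
  -- each component e_j A is a domain
  have hdom : ∀ (j : Fin r) (a b : Amod F n),
      a * e j = a → b * e j = b → a ≠ 0 → b ≠ 0 → a * b ≠ 0 := by
    intro j a b ha hb ha0 hb0 hab
    obtain ⟨P, hP⟩ := Ideal.Quotient.mk_surjective (I := Iq) a
    obtain ⟨R, hR⟩ := Ideal.Quotient.mk_surjective (I := Iq) b
    have hPj : ¬ π j ∣ P := fun hd => ha0 (by rw [← ha, ← hP]; exact hkerrev j P hd)
    have hRj : ¬ π j ∣ R := fun hd => hb0 (by rw [← hb, ← hR]; exact hkerrev j R hd)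
    have hPR : mk (P * R) * e j = 0 := by
      rw [map_mul, hP, hR, hab, zero_mul]
    have hprime : Prime (π j) := UniqueFactorizationMonoid.irreducible_iff_prime.mp (hirr j)
    rcases (hprime.2.2 P R (hker j _ hPR)) with h | h
    · exact hPj h
    · exact hRj h
  -- idempotents in a component are trivial
  have hprim : ∀ (j : Fin r) (a : Amod F n), a * a = a → a * e j = a → a = 0 ∨ a = e j := by
    intro j a haa hae
    by_cases h0 : a = 0
    · exact Or.inl h0
    right
    by_contra hne'
    have hb : (a - e j) * e j = a - e j := by rw [sub_mul, hae, hidem]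
    have hz : a * (a - e j) = 0 := by rw [mul_sub, haa, hae, sub_self]
    exact hdom j a (a - e j) hae hb h0 (sub_ne_zero.mpr hne') hz
  -- σ permutes the primitive idempotents
  have htau : ∀ k, ∃ j, σ (e k) = e j := by
    intro k
    have hσek : σ (e k) ≠ 0 := fun h => hne k (by
      have h2 := congrArg σ.symm h
      simpa using h2)
    have hex : ∃ j, σ (e k) * e j ≠ 0 := by
      by_contra hco
      push_neg at hco
      apply hσek
      calc σ (e k) = σ (e k) * 1 := (mul_one _).symm
        _ = σ (e k) * ∑ j, e j := by rw [hsum]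
        _ = ∑ j, σ (e k) * e j := Finset.mul_sum _ _ _
        _ = 0 := by simp [hco]
    obtain ⟨j, hj⟩ := hex
    have hxmul : σ (e k) * σ (e k) = σ (e k) := by rw [← map_mul, hidem]
    have hxx : (σ (e k) * e j) * (σ (e k) * e j) = σ (e k) * e j := by
      calc (σ (e k) * e j) * (σ (e k) * e j) = (σ (e k) * σ (e k)) * (e j * e j) := by ring
        _ = σ (e k) * e j := by rw [hxmul, hidem]
    rcases hprim j (σ (e k) * e j) hxx (by rw [mul_assoc, hidem]) with h | h
    · exact absurd h hj
    · refine ⟨j, ?_⟩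
      have hy : σ.symm (e j) * σ.symm (e j) = σ.symm (e j) := by rw [← map_mul, hidem]
      have hyk : σ.symm (e j) * e k = σ.symm (e j) := by
        have h3 := congrArg σ.symm h
        rw [map_mul, AlgEquiv.symm_apply_apply] at h3
        conv_rhs => rw [← h3]
        ring
      have hy0 : σ.symm (e j) ≠ 0 := fun hh => hne j (by
        have h4 := congrArg σ hh
        simpa using h4)
      rcases hprim k (σ.symm (e j)) hy hyk with h' | h'
      · exact absurd h' hy0
      · have h5 := congrArg σ h'
        rw [AlgEquiv.apply_symm_apply] at h5
        exact h5.symm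
  have hsigpow : ∀ (μ : ℕ) (k : Fin r), ∃ j, (σ ^ μ) (e k) = e j := by
    intro μ
    induction μ with
    | zero => exact fun k => ⟨k, by simp⟩
    | succ m ih =>
      intro k
      obtain ⟨j1, hj1⟩ := htau k
      obtain ⟨j2, hj2⟩ := ih j1
      exact ⟨j2, by rw [pow_succ, AlgEquiv.mul_apply, hj1, hj2]⟩
  choose jm hjm using hsigpow
  -- leading coefficients of components are pure
  have hlcpure : ∀ k, (G k).coeff (G k).natDegree
      = e (jm (G k).natDegree k) * g.coeff (G k).natDegree := by
    intro k
    rw [hGcoeff, hjm]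
  have hlcabs : ∀ k, e (jm (G k).natDegree k) * (G k).coeff (G k).natDegree
      = (G k).coeff (G k).natDegree := by
    intro k
    rw [hlcpure k, ← mul_assoc, hidem]
  have hlcne : ∀ k, k ∈ T → (G k).coeff (G k).natDegree ≠ 0 := by
    intro k hk
    rw [Polynomial.coeff_natDegree]
    exact Polynomial.leadingCoeff_ne_zero.mpr ((hTG k).mp hk)
  -- left-reducedness implies the leading idempotent indices are distinct
  have hjkey : ∀ k l, k ∈ T → l ∈ T → k ≠ l →
      jm (G k).natDegree k = jm (G l).natDegree l →
      (G l).natDegree ≤ (G k).natDegree → False := by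
    intro k l hkT hlT hkl hj hdl
    have hGk := (hTG k).mp hkT
    have hGl := (hTG l).mp hlT
    have hlcl : e (jm (G l).natDegree l) * (G l).leadingCoeff ≠ 0 := by
      rw [← Polynomial.coeff_natDegree, hlcabs l, Polynomial.coeff_natDegree]
      exact Polynomial.leadingCoeff_ne_zero.mpr hGl
    have hIsLM : IsLM e (G l) (Polynomial.monomial (G l).natDegree (e (jm (G l).natDegree l))) := by
      refine ⟨jm (G l).natDegree l, rfl, hlcl, fun l' hl' => ?_⟩
      rw [← Polynomial.coeff_natDegree, hlcpure l, ← mul_assoc,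
        horth l' (jm (G l).natDegree l) (ne_of_gt hl'), zero_mul]
    have hlck : e (jm (G k).natDegree k) * (G k).coeff (G k).natDegree ≠ 0 := by
      rw [hlcabs k]
      exact hlcne k hkT
    refine hred k l hkl hGk hGl (G k).natDegree (jm (G k).natDegree k) hlck _ hIsLM
      ⟨Polynomial.monomial ((G k).natDegree - (G l).natDegree)
        ((σ ^ (G l).natDegree).symm ((G k).coeff (G k).natDegree)), ?_⟩
    rw [skewMul_monomial_monomial, AlgEquiv.apply_symm_apply, Nat.sub_add_cancel hdl]
    congr 1
    rw [hlcabs k, ← hj, mul_comm, hlcabs k]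
  have hjinj : ∀ k l, k ∈ T → l ∈ T →
      jm (G k).natDegree k = jm (G l).natDegree l → k = l := by
    intro k l hkT hlT hj
    by_contra hkl
    rcases le_total (G l).natDegree (G k).natDegree with hdl | hdl
    · exact hjkey k l hkT hlT hkl hj hdl
    · exact hjkey l k hlT hkT (fun h => hkl h.symm) hj.symm hdl
  -- decomposition of any left multiple of g into components
  have hsplit : ∀ u : Polynomial (Amod F n),
      skewMul σ u g = ∑ k : Fin r, skewMul σ (u * Polynomial.C (e k)) (G k) := by
    intro u
    ext m
    rw [Polynomial.finset_sum_coeff, skewMul_coeff]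
    have hterm : ∀ k : Fin r, (skewMul σ (u * Polynomial.C (e k)) (G k)).coeff m
        = ∑ ν ∈ Finset.range (m+1),
          (σ ^ (m-ν)) (u.coeff ν * e k) * ((σ ^ (m-ν)) (e k) * g.coeff (m-ν)) := by
      intro k
      rw [skewMul_coeff]
      refine Finset.sum_congr rfl fun ν _ => ?_
      rw [Polynomial.coeff_mul_C, hGcoeff]
    simp only [hterm]
    rw [Finset.sum_comm]
    refine Finset.sum_congr rfl fun ν _ => ?_
    have h1 : ∀ k : Fin r, (σ ^ (m-ν)) (u.coeff ν * e k) * ((σ ^ (m-ν)) (e k) * g.coeff (m-ν))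
        = (σ ^ (m-ν)) (u.coeff ν * e k) * g.coeff (m-ν) := by
      intro k
      rw [← mul_assoc, ← map_mul, mul_assoc, hidem]
    rw [Finset.sum_congr rfl (fun k _ => h1 k), ← Finset.sum_mul, ← map_sum,
      ← Finset.mul_sum, hsum, mul_one]
  -- main injectivity claim
  have main : ∀ v : Fin r → Polynomial (Amod F n),
      (∀ k, v k * Polynomial.C (e k) = v k) →
      ∑ k ∈ T, skewMul σ (v k) (G k) = 0 → ∀ k ∈ T, v k = 0 := by
    intro v hve hs0
    have hvec : ∀ (k : Fin r) (ν : ℕ), (v k).coeff ν * e k = (v k).coeff ν := by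
      intro k ν
      conv_rhs => rw [← hve k]
      rw [Polynomial.coeff_mul_C]
    by_contra hcon
    push_neg at hcon
    obtain ⟨k1, hk1T, hk1⟩ := hcon
    set S : Finset (Fin r) := T.filter (fun k => v k ≠ 0) with hS
    have hSsub : S ⊆ T := Finset.filter_subset _ _
    have hSne : S.Nonempty := ⟨k1, by rw [hS]; exact Finset.mem_filter.mpr ⟨hk1T, hk1⟩⟩
    obtain ⟨k0, hk0S, hNeq⟩ :=
      Finset.exists_mem_eq_sup S hSne (fun k => (v k).natDegree + (G k).natDegree)
    set N : ℕ := S.sup (fun k => (v k).natDegree + (G k).natDegree) with hNdef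
    have hk0T : k0 ∈ T := hSsub hk0S
    have hvk0 : v k0 ≠ 0 := (Finset.mem_filter.mp hk0S).2
    -- value of the coefficient of degree N of each summand
    have hterm : ∀ k ∈ T, (skewMul σ (v k) (G k)).coeff N =
        if (v k).natDegree + (G k).natDegree = N ∧ v k ≠ 0
        then (σ ^ (G k).natDegree) ((v k).coeff (v k).natDegree) * (G k).coeff (G k).natDegree
        else 0 := by
      intro k hk
      by_cases hvk : v k = 0
      · rw [if_neg (fun h => h.2 hvk), hvk, skewMul_zero_left, Polynomial.coeff_zero]
      have hkS : k ∈ S := Finset.mem_filter.mpr ⟨hk, hvk⟩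
      have hle : (v k).natDegree + (G k).natDegree ≤ N :=
        Finset.le_sup (f := fun k => (v k).natDegree + (G k).natDegree) hkS
      by_cases hdN : (v k).natDegree + (G k).natDegree = N
      · rw [if_pos ⟨hdN, hvk⟩, skewMul_coeff]
        rw [Finset.sum_eq_single (v k).natDegree]
        · have h2 : N - (v k).natDegree = (G k).natDegree := by omega
          rw [h2]
        · intro ν _ hν
          rcases lt_or_gt_of_ne hν with h | h
          · rw [Polynomial.coeff_eq_zero_of_natDegree_lt (p := G k) (by omega), mul_zero]
          · rw [Polynomial.coeff_eq_zero_of_natDegree_lt (p := v k) h, map_zero, zero_mul]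
        · intro h
          exact absurd (Finset.mem_range.mpr (by omega)) h
      · rw [if_neg (fun h => hdN h.1), skewMul_coeff]
        apply Finset.sum_eq_zero
        intro ν hν
        have hνm : ν ≤ N := by simpa [Nat.lt_succ_iff] using hν
        by_cases hνd : ν ≤ (v k).natDegree
        · rw [Polynomial.coeff_eq_zero_of_natDegree_lt (p := G k) (by omega), mul_zero]
        · rw [Polynomial.coeff_eq_zero_of_natDegree_lt (p := v k) (by omega), map_zero, zero_mul]
    -- project onto the leading component of k0
    have h00 : (∑ k ∈ T, skewMul σ (v k) (G k)).coeff N = 0 := by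
      rw [hs0, Polynomial.coeff_zero]
    rw [Polynomial.finset_sum_coeff] at h00
    have h01 : ∑ k ∈ T, e (jm (G k0).natDegree k0) * (skewMul σ (v k) (G k)).coeff N = 0 := by
      rw [← Finset.mul_sum, h00, mul_zero]
    rw [Finset.sum_eq_single k0] at h01
    · -- the k0 term is nonzero: contradiction
      rw [hterm k0 hk0T, if_pos ⟨hNeq.symm, hvk0⟩] at h01
      have habs1 : (σ ^ (G k0).natDegree) ((v k0).coeff (v k0).natDegree)
          = (σ ^ (G k0).natDegree) ((v k0).coeff (v k0).natDegree) * e (jm (G k0).natDegree k0) := by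
        conv_lhs => rw [← hvec k0 (v k0).natDegree]
        rw [map_mul, hjm]
      have hane : (σ ^ (G k0).natDegree) ((v k0).coeff (v k0).natDegree) ≠ 0 := by
        have hlcv : (v k0).coeff (v k0).natDegree ≠ 0 := by
          rw [Polynomial.coeff_natDegree]
          exact Polynomial.leadingCoeff_ne_zero.mpr hvk0
        exact fun h => hlcv ((σ ^ (G k0).natDegree).injective (by rw [h, map_zero]))
      have hbabs : (G k0).coeff (G k0).natDegree * e (jm (G k0).natDegree k0)
          = (G k0).coeff (G k0).natDegree := by
        rw [mul_comm]; exact hlcabs k0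
      have hprod := hdom (jm (G k0).natDegree k0) _ _ habs1.symm hbabs hane (hlcne k0 hk0T)
      apply hprod
      calc (σ ^ (G k0).natDegree) ((v k0).coeff (v k0).natDegree) * (G k0).coeff (G k0).natDegree
          = e (jm (G k0).natDegree k0) * ((σ ^ (G k0).natDegree) ((v k0).coeff (v k0).natDegree)
            * (G k0).coeff (G k0).natDegree) := by
            conv_lhs => rw [← hlcabs k0]
            ring
        _ = 0 := h01
    · -- other terms vanish
      intro k hkT hkne
      rw [hterm k hkT]
      split_ifs with hcase
      · have habs1 : (σ ^ (G k).natDegree) ((v k).coeff (v k).natDegree)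
            = (σ ^ (G k).natDegree) ((v k).coeff (v k).natDegree) * e (jm (G k).natDegree k) := by
          conv_lhs => rw [← hvec k (v k).natDegree]
          rw [map_mul, hjm]
        have hjne : jm (G k0).natDegree k0 ≠ jm (G k).natDegree k :=
          fun h => hkne (hjinj k k0 hkT hk0T h.symm)
        conv_lhs => rw [habs1]
        calc e (jm (G k0).natDegree k0) * ((σ ^ (G k).natDegree) ((v k).coeff (v k).natDegree)
              * e (jm (G k).natDegree k) * (G k).coeff (G k).natDegree)
            = ((σ ^ (G k).natDegree) ((v k).coeff (v k).natDegree)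
              * (G k).coeff (G k).natDegree)
              * (e (jm (G k0).natDegree k0) * e (jm (G k).natDegree k)) := by ring
          _ = 0 := by rw [horth _ _ hjne, mul_zero]
      · rw [mul_zero]
    · intro h
      exact absurd hk0T h
  -- the product of the π over T annihilates g from the left
  have hqbar : ∀ k ∈ T, mk (∏ l ∈ T, π l) * e k = 0 := by
    intro k hk
    rw [map_prod, ← Finset.prod_erase_mul _ _ hk, mul_assoc]
    rw [hπe k, mul_zero]
  have hqg : skewMul σ (Polynomial.C (mk (∏ l ∈ T, π l))) g = 0 := by
    ext m
    rw [skewMul_C_left, Polynomial.coeff_zero]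
    have hone : (1 : Amod F n) = ∑ k : Fin r, (σ ^ m) (e k) := by
      rw [← map_sum, hsum, map_one]
    calc (σ ^ m) (mk (∏ l ∈ T, π l)) * g.coeff m
        = (σ ^ m) (mk (∏ l ∈ T, π l)) * ((∑ k : Fin r, (σ ^ m) (e k)) * g.coeff m) := by
          rw [← hone, one_mul]
      _ = ∑ k : Fin r, (σ ^ m) (mk (∏ l ∈ T, π l) * e k) * g.coeff m := by
          rw [Finset.sum_mul, Finset.mul_sum]
          refine Finset.sum_congr rfl fun k _ => ?_
          rw [map_mul]; ring
      _ = 0 := by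
          apply Finset.sum_eq_zero
          intro k _
          by_cases hk : k ∈ T
          · rw [hqbar k hk, map_zero, zero_mul]
          · have h2 : (σ ^ m) (e k) * g.coeff m = 0 := by
              rw [← hGcoeff, hGzero k hk, Polynomial.coeff_zero]
            rw [map_mul, mul_assoc, h2, mul_zero]
  -- T is nonempty, hence κ ≥ 1
  have hTnon : T.Nonempty := by
    by_contra hTe
    rw [Finset.not_nonempty_iff_eq_empty] at hTe
    apply hg
    have h1 : Polynomial.C ((1 : Amod F n)) = ∑ k : Fin r, Polynomial.C (e k) := by
      rw [← map_sum, hsum]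
    have h2 : skewMul σ (Polynomial.C ((1 : Amod F n))) g = g := by
      ext m; rw [skewMul_C_left, map_one, one_mul]
    rw [← h2, h1, skewMul_sum_left]
    apply Finset.sum_eq_zero
    intro k _
    have : G k = 0 := hGzero k (by rw [hTe]; exact Finset.notMem_empty k)
    exact this
  have hqmonic : (∏ k ∈ T, π k).Monic := Polynomial.monic_prod_of_monic _ _ fun k _ => hmonic k
  have hπdeg : ∀ k, 1 ≤ (π k).natDegree := by
    intro k
    by_contra hd
    have h0 : (π k).natDegree = 0 := by omega
    have h1 : π k = 1 := (hmonic k).natDegree_eq_zero.mp h0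
    exact (hirr k).not_isUnit (by rw [h1]; exact isUnit_one)
  have hκpos : 0 < κ := by
    rw [hκ, Polynomial.natDegree_prod _ _ (fun k _ => (hmonic k).ne_zero)]
    exact Finset.sum_pos (fun k _ => hπdeg k) hTnon
  -- the algebra map F → A
  have hmkC : ∀ γ : F, algebraMap F (Amod F n) γ = mk (Polynomial.C γ) := by
    intro γ
    rw [← Polynomial.algebraMap_eq, hmk]
    exact (Ideal.Quotient.mk_algebraMap (R₁ := F) (A := Polynomial F) Iq γ).symm
  -- coprime products divide
  have hpidvd : ∀ (s : Finset (Fin r)) (P : Polynomial F),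
      (∀ k ∈ s, π k ∣ P) → (∏ k ∈ s, π k) ∣ P := by
    intro s
    induction s using Finset.induction_on with
    | empty => intro P _; simpa using one_dvd P
    | @insert a s ha ih =>
      intro P hP
      rw [Finset.prod_insert ha]
      have hcop : IsCoprime (π a) (∏ k ∈ s, π k) := by
        apply IsCoprime.prod_right
        intro l hl
        apply (hirr a).coprime_iff_not_dvd.mpr
        intro hd
        have hassoc := (hirr a).associated_of_dvd (hirr l) hd
        have heq := Polynomial.eq_of_monic_of_associated (hmonic a) (hmonic l) hassoc
        exact ha (hdist heq ▸ hl)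
      exact hcop.mul_dvd (hP a (Finset.mem_insert_self a s))
        (ih P fun k hk => hP k (Finset.mem_insert_of_mem hk))
  -- the combination lemma
  have hcomb : ∀ c : Fin κ → Polynomial F,
      (∑ i : Fin κ, skewMul σ ((c i).map (algebraMap F (Amod F n)))
          (skewMul σ (Polynomial.C (xbar F n ^ (i : ℕ))) g))
        = skewMul σ (∑ i : Fin κ, (c i).map (algebraMap F (Amod F n))
            * Polynomial.C (xbar F n ^ (i : ℕ))) g := by
    intro c
    rw [skewMul_sum_left]
    exact Finset.sum_congr rfl fun i _ => (skewMul_mul_C_left σ _ _ g).symm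
  constructor
  · -- linear independence
    intro c hc i
    set u : Polynomial (Amod F n) := ∑ i : Fin κ, (c i).map (algebraMap F (Amod F n))
        * Polynomial.C (xbar F n ^ (i : ℕ)) with hu
    have hug : skewMul σ u g = 0 := by rw [← hcomb c]; exact hc
    have h1 : ∑ k : Fin r, skewMul σ (u * Polynomial.C (e k)) (G k) = 0 :=
      (hsplit u).symm.trans hug
    rw [← Finset.sum_subset (Finset.subset_univ T)
      (fun k _ hk => by rw [hGzero k hk, skewMul_zero_right])] at h1
    have hu0 : ∀ k ∈ T, u * Polynomial.C (e k) = 0 :=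
      main (fun k => u * Polynomial.C (e k))
        (fun k => by rw [mul_assoc, ← Polynomial.C_mul, hidem]) h1
    have hcoeff0 : ∀ (ν : ℕ), ∀ k ∈ T, u.coeff ν * e k = 0 := by
      intro ν k hk
      have h2 := congrArg (fun p => Polynomial.coeff p ν) (hu0 k hk)
      simp only [Polynomial.coeff_mul_C, Polynomial.coeff_zero] at h2
      exact h2
    have hucoeff : ∀ ν : ℕ, u.coeff ν
        = mk (∑ i : Fin κ, Polynomial.C ((c i).coeff ν) * Polynomial.X ^ (i : ℕ)) := by
      intro ν
      rw [hu, Polynomial.finset_sum_coeff, map_sum]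
      refine Finset.sum_congr rfl fun i' _ => ?_
      rw [Polynomial.coeff_mul_C, Polynomial.coeff_map, map_mul, map_pow, hmkC]
      rfl
    have hPzero : ∀ ν : ℕ,
        (∑ i : Fin κ, Polynomial.C ((c i).coeff ν) * Polynomial.X ^ (i : ℕ)) = 0 := by
      intro ν
      by_contra hP0
      have hdvd : (∏ k ∈ T, π k) ∣ _ := hpidvd T _ (fun k hk => hker k _ (by
        rw [← hucoeff ν]; exact hcoeff0 ν k hk))
      have hdeg : (∑ i : Fin κ, Polynomial.C ((c i).coeff ν)
          * Polynomial.X ^ (i : ℕ)).natDegree ≤ κ - 1 := by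
        apply Polynomial.natDegree_sum_le_of_forall_le
        intro i' _
        refine le_trans (Polynomial.natDegree_C_mul_le _ _) ?_
        rw [Polynomial.natDegree_X_pow]
        have := i'.isLt
        omega
      have hge := Polynomial.natDegree_le_of_dvd hdvd hP0
      rw [← hκ] at hge
      omega
    apply Polynomial.ext
    intro ν
    have h3 := congrArg (fun p => Polynomial.coeff p (i : ℕ)) (hPzero ν)
    simp only [Polynomial.finset_sum_coeff, Polynomial.coeff_C_mul, Polynomial.coeff_X_pow,
      Polynomial.coeff_zero] at h3
    rw [Finset.sum_eq_single i] at h3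
    · simpa using h3
    · intro i' _ hne'
      rw [if_neg (fun h => hne' (Fin.ext h.symm)), mul_zero]
    · intro h
      exact absurd (Finset.mem_univ i) h
  · -- spanning
    intro f
    constructor
    · rintro ⟨u, rfl⟩
      choose lift hlift using fun ν : ℕ => Ideal.Quotient.mk_surjective (I := Iq) (u.coeff ν)
      set q : Polynomial F := ∏ k ∈ T, π k with hq
      have hdegQ : ∀ ν : ℕ, (lift ν %ₘ q).natDegree < κ := by
        intro ν
        by_cases h0 : lift ν %ₘ q = 0
        · rw [h0]; simpa using hκpos
        · have hd1 := Polynomial.degree_modByMonic_lt (lift ν) hqmonic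
          have hd2 := Polynomial.natDegree_lt_natDegree h0 hd1
          omega
      refine ⟨fun i => ∑ ν ∈ u.support, Polynomial.monomial ν ((lift ν %ₘ q).coeff (i : ℕ)), ?_⟩
      rw [hcomb]
      have hmkQ : ∀ ν : ℕ, mk (lift ν %ₘ q)
          = ∑ i : Fin κ, algebraMap F (Amod F n) ((lift ν %ₘ q).coeff (i : ℕ))
            * xbar F n ^ (i : ℕ) := by
        intro ν
        conv_lhs => rw [Polynomial.as_sum_range' (lift ν %ₘ q) κ (hdegQ ν)]
        rw [map_sum, ← Fin.sum_univ_eq_sum_range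
          (fun i => mk (Polynomial.monomial i ((lift ν %ₘ q).coeff i)))]
        refine Finset.sum_congr rfl fun i _ => ?_
        rw [← Polynomial.C_mul_X_pow_eq_monomial, map_mul, map_pow, hmkC]
        rfl
      -- rewrite the right-hand side
      have hrhs : (∑ i : Fin κ, ((fun i => ∑ ν ∈ u.support,
            Polynomial.monomial ν ((lift ν %ₘ q).coeff (i : ℕ))) i).map (algebraMap F (Amod F n))
            * Polynomial.C (xbar F n ^ (i : ℕ)))
          = ∑ ν ∈ u.support, Polynomial.monomial ν (mk (lift ν %ₘ q)) := by
        simp only [Polynomial.map_sum, Polynomial.map_monomial, Finset.sum_mul]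
        rw [Finset.sum_comm]
        refine Finset.sum_congr rfl fun ν _ => ?_
        rw [hmkQ ν, map_sum]
        refine Finset.sum_congr rfl fun i _ => ?_
        rw [Polynomial.monomial_mul_C]
      rw [hrhs]
      -- now the left-hand side
      conv_lhs => rw [Polynomial.as_sum_support u]
      rw [skewMul_sum_left, skewMul_sum_left]
      refine Finset.sum_congr rfl fun ν _ => ?_
      have hsplitu : u.coeff ν = mk (lift ν %ₘ q) + mk (q * (lift ν /ₘ q)) := by
        rw [← map_add, Polynomial.modByMonic_add_div (lift ν) q]
        exact (hlift ν).symm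
      rw [hsplitu, map_add, skewMul_add_left]
      have hzero : skewMul σ (Polynomial.monomial ν (mk (q * (lift ν /ₘ q)))) g = 0 := by
        rw [map_mul, mul_comm, ← Polynomial.monomial_mul_C, skewMul_mul_C_left, hqg,
          skewMul_zero_right]
      rw [hzero, add_zero]
    · rintro ⟨c, rfl⟩
      exact ⟨∑ i : Fin κ, (c i).map (algebraMap F (Amod F n))
        * Polynomial.C (xbar F n ^ (i : ℕ)), hcomb c⟩
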